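/- Let D : ℝⁿ → ℝⁿ be a symmetric linear map whose eigenvalues all lie in [c, 1] for some c > 0, define J(x) = (1/2)⟨x, (D⁻¹ − Id)x⟩, and let τ > 0. Then the linear map τD⁻¹ − (τ−1)·Id is invertible, and the proximal operator of the scaled functional τJ is given by the spectral filter prox_{τJ} = (τD⁻¹ − (τ−1)·Id)⁻¹; in particular, if v is an eigenvector of D with eigenvalue λ ∈ [c,1], then prox_{τJ}(v) = (λ/(τ − λ(τ−1)))·v. -/

import Mathlib

open scoped RealInnerProductSpace

private lemma stmt9_diag_nonneg {n : ℕ}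
    (b : OrthonormalBasis (Fin n) ℝ (EuclideanSpace ℝ (Fin n)))
    (T : EuclideanSpace ℝ (Fin n) →ₗ[ℝ] EuclideanSpace ℝ (Fin n)) (d : Fin n → ℝ)
    (hT : ∀ i, T (b i) = d i • b i) (hd : ∀ i, 0 ≤ d i) (x : EuclideanSpace ℝ (Fin n)) :
    0 ≤ ⟪x, T x⟫ := by
  have hx : T x = ∑ i, (b.repr x i * d i) • b i := by
    conv_lhs => rw [← b.sum_repr x]
    rw [map_sum]
    simp [hT, smul_smul]
  rw [hx, inner_sum]
  apply Finset.sum_nonneg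
  intro i _
  rw [real_inner_smul_right]
  have h2 : ⟪x, b i⟫ = b.repr x i := by rw [real_inner_comm, b.repr_apply_apply]
  rw [h2]
  nlinarith [sq_nonneg (b.repr x i), hd i]

set_option maxHeartbeats 1000000 in
/-- **Spectral filtering controls the regularization strength of a linear
denoiser.** Let `D` be symmetric with all eigenvalues in `[c, 1]`, `c > 0`, so
`D` has an inverse `D⁻¹`, and let `J(x) = ½⟨x, (D⁻¹ − Id)x⟩`, `τ > 0`. Then
`τD⁻¹ − (τ−1)Id` is invertible, its inverse is the proximal map of `τJ` (the
unique minimizer of `u ↦ J(u) + (1/(2τ))‖u − y‖²`), and on an eigenvector `v`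
of `D` with eigenvalue `λ ∈ [c,1]` it acts as `v ↦ (λ/(τ − λ(τ−1))) v`. -/
theorem stmt9 {n : ℕ}
    (D : EuclideanSpace ℝ (Fin n) →ₗ[ℝ] EuclideanSpace ℝ (Fin n))
    (hsym : ∀ x y : EuclideanSpace ℝ (Fin n), ⟪D x, y⟫ = ⟪x, D y⟫)
    (c : ℝ) (hc : 0 < c)
    (heig : ∀ μ : ℝ, Module.End.HasEigenvalue (D : Module.End ℝ (EuclideanSpace ℝ (Fin n))) μ →
      μ ∈ Set.Icc c 1)
    (τ : ℝ) (hτ : 0 < τ) :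
    ∃ Dinv Ginv : EuclideanSpace ℝ (Fin n) →ₗ[ℝ] EuclideanSpace ℝ (Fin n),
      Dinv.comp D = LinearMap.id ∧ D.comp Dinv = LinearMap.id ∧
      Ginv.comp (τ • Dinv - (τ - 1) • LinearMap.id) = LinearMap.id ∧
      (τ • Dinv - (τ - 1) • LinearMap.id).comp Ginv = LinearMap.id ∧
      (∀ y : EuclideanSpace ℝ (Fin n),
        (∀ u : EuclideanSpace ℝ (Fin n),
          (1 / 2 : ℝ) * ⟪Ginv y, Dinv (Ginv y) - Ginv y⟫ +
              (1 / (2 * τ)) * ‖Ginv y - y‖ ^ 2 ≤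
            (1 / 2 : ℝ) * ⟪u, Dinv u - u⟫ + (1 / (2 * τ)) * ‖u - y‖ ^ 2) ∧
        (∀ u : EuclideanSpace ℝ (Fin n),
          (∀ w : EuclideanSpace ℝ (Fin n),
            (1 / 2 : ℝ) * ⟪u, Dinv u - u⟫ + (1 / (2 * τ)) * ‖u - y‖ ^ 2 ≤
              (1 / 2 : ℝ) * ⟪w, Dinv w - w⟫ + (1 / (2 * τ)) * ‖w - y‖ ^ 2) →
          u = Ginv y)) ∧
      (∀ (v : EuclideanSpace ℝ (Fin n)) (lam : ℝ), lam ∈ Set.Icc c 1 →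
        D v = lam • v → Ginv v = (lam / (τ - lam * (τ - 1))) • v) := by
  classical
  have hτ0 : τ ≠ 0 := hτ.ne'
  have hD : D.IsSymmetric := hsym
  have hn : Module.finrank ℝ (EuclideanSpace ℝ (Fin n)) = n := finrank_euclideanSpace_fin
  set b := hD.eigenvectorBasis hn with hb
  set μ := hD.eigenvalues hn with hμ
  have hDb : ∀ i, D (b i) = μ i • b i := fun i =>
    hD.apply_eigenvectorBasis hn i
  have hμmem : ∀ i, μ i ∈ Set.Icc c 1 := fun i =>
    heig _ (hD.hasEigenvalue_eigenvalues hn i)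
  have hμpos : ∀ i, 0 < μ i := fun i => lt_of_lt_of_le hc (hμmem i).1
  have hden : ∀ lam : ℝ, lam ∈ Set.Icc c 1 → 0 < τ - lam * (τ - 1) := by
    intro lam hlam
    nlinarith [hlam.1, hlam.2]
  set g : Fin n → ℝ := fun i => μ i / (τ - μ i * (τ - 1)) with hg
  set Dinv : EuclideanSpace ℝ (Fin n) →ₗ[ℝ] EuclideanSpace ℝ (Fin n) :=
    b.toBasis.constr ℝ (fun i => (μ i)⁻¹ • b i) with hDinvdef
  set Ginv : EuclideanSpace ℝ (Fin n) →ₗ[ℝ] EuclideanSpace ℝ (Fin n) :=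
    b.toBasis.constr ℝ (fun i => g i • b i) with hGinvdef
  have hDinvb : ∀ i, Dinv (b i) = (μ i)⁻¹ • b i := fun i => by
    simpa [hDinvdef] using b.toBasis.constr_basis ℝ (fun i => (μ i)⁻¹ • b i) i
  have hGinvb : ∀ i, Ginv (b i) = g i • b i := fun i => by
    simpa [hGinvdef] using b.toBasis.constr_basis ℝ (fun i => g i • b i) i
  set G : EuclideanSpace ℝ (Fin n) →ₗ[ℝ] EuclideanSpace ℝ (Fin n) :=
    τ • Dinv - (τ - 1) • LinearMap.id with hGdef
  have hGb : ∀ i, G (b i) = (τ * (μ i)⁻¹ - (τ - 1)) • b i := by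
    intro i
    simp only [hGdef, LinearMap.sub_apply, LinearMap.smul_apply, LinearMap.id_apply, hDinvb]
    module
  -- composition identities
  have hDinvD : Dinv.comp D = LinearMap.id := by
    apply b.toBasis.ext
    intro i
    simp only [LinearMap.comp_apply, LinearMap.id_apply, OrthonormalBasis.coe_toBasis,
      hDb, map_smul, hDinvb, smul_smul]
    rw [mul_inv_cancel₀ (hμpos i).ne', one_smul]
  have hDDinv : D.comp Dinv = LinearMap.id := by
    apply b.toBasis.ext
    intro i
    simp only [LinearMap.comp_apply, LinearMap.id_apply, OrthonormalBasis.coe_toBasis,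
      hDinvb, map_smul, hDb, smul_smul]
    rw [inv_mul_cancel₀ (hμpos i).ne', one_smul]
  have hgG : ∀ i, g i * (τ * (μ i)⁻¹ - (τ - 1)) = 1 := by
    intro i
    have h1 := (hμpos i).ne'
    have h2 := (hden (μ i) (hμmem i)).ne'
    field_simp [hg]
    simp only [hg]
    exact div_mul_cancel₀ _ h2
  have hGinvG : Ginv.comp G = LinearMap.id := by
    apply b.toBasis.ext
    intro i
    simp only [LinearMap.comp_apply, LinearMap.id_apply, OrthonormalBasis.coe_toBasis,
      hGb, map_smul, hGinvb, smul_smul]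
    rw [mul_comm, hgG i, one_smul]
  have hGGinv : G.comp Ginv = LinearMap.id := by
    apply b.toBasis.ext
    intro i
    simp only [LinearMap.comp_apply, LinearMap.id_apply, OrthonormalBasis.coe_toBasis,
      hGinvb, map_smul, hGb, smul_smul]
    rw [hgG i, one_smul]
  -- pointwise versions
  have hDDinv' : ∀ x, D (Dinv x) = x := fun x => by
    have := DFunLike.congr_fun hDDinv x; simpa using this
  have hGGinv' : ∀ x, G (Ginv x) = x := fun x => by
    have := DFunLike.congr_fun hGGinv x; simpa using this
  have hGinvG' : ∀ x, Ginv (G x) = x := fun x => by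
    have := DFunLike.congr_fun hGinvG x; simpa using this
  -- symmetry of Dinv
  have hDinvSym : ∀ x y : EuclideanSpace ℝ (Fin n), ⟪Dinv x, y⟫ = ⟪x, Dinv y⟫ := by
    intro x y
    conv_lhs => rw [← hDDinv' y]
    rw [← hsym, hDDinv' x]
  -- positivity of Dinv - id
  have hS : ∀ x : EuclideanSpace ℝ (Fin n), 0 ≤ ⟪x, Dinv x - x⟫ := by
    intro x
    have := stmt9_diag_nonneg b (Dinv - LinearMap.id) (fun i => (μ i)⁻¹ - 1)
      (fun i => by
        simp only [LinearMap.sub_apply, LinearMap.id_apply, hDinvb]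
        rw [sub_smul, one_smul])
      (fun i => by
        have h1 := hμpos i
        have h2 := (hμmem i).2
        nlinarith [mul_inv_cancel₀ h1.ne', inv_nonneg.mpr h1.le]) x
    simpa using this
  refine ⟨Dinv, Ginv, hDinvD, hDDinv, hGinvG, hGGinv, ?_, ?_⟩
  · intro y
    set p := Ginv y with hp
    have hGp : τ • Dinv p - (τ - 1) • p = y := by
      have := hGGinv' y
      simpa [hGdef] using this
    have key : ∀ u : EuclideanSpace ℝ (Fin n),
        (1 / 2 : ℝ) * ⟪u, Dinv u - u⟫ + (1 / (2 * τ)) * ‖u - y‖ ^ 2 =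
          ((1 / 2 : ℝ) * ⟪p, Dinv p - p⟫ + (1 / (2 * τ)) * ‖p - y‖ ^ 2) +
          ((1 / 2 : ℝ) * ⟪u - p, Dinv (u - p) - (u - p)⟫ + (1 / (2 * τ)) * ‖u - p‖ ^ 2) := by
      intro u
      set h := u - p with hh
      have hu : u = p + h := by rw [hh]; abel
      have e3 : τ * ⟪h, Dinv p - p⟫ + ⟪h, p - y⟫ = 0 := by
        have hz : τ • (Dinv p - p) + (p - y) = 0 := by
          rw [← hGp]; rw [smul_sub, sub_smul, one_smul]; abel
        calc τ * ⟪h, Dinv p - p⟫ + ⟪h, p - y⟫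
            = ⟪h, τ • (Dinv p - p) + (p - y)⟫ := by
              rw [inner_add_right, real_inner_smul_right]
          _ = 0 := by rw [hz, inner_zero_right]
      have hc1 : ⟪p, Dinv h⟫ = ⟪h, Dinv p⟫ := by
        rw [← hDinvSym p h, real_inner_comm]
      have hc2 : ⟪p, h⟫ = ⟪h, p⟫ := real_inner_comm _ _
      have e1 : ⟪u, Dinv u - u⟫ =
          ⟪p, Dinv p - p⟫ + 2 * ⟪h, Dinv p - p⟫ + ⟪h, Dinv h - h⟫ := by
        rw [hu]
        simp only [map_add, inner_sub_right, inner_add_right, inner_add_left]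
        linarith [hc1, hc2]
      have e2 : ‖u - y‖ ^ 2 = ‖p - y‖ ^ 2 + 2 * ⟪h, p - y⟫ + ‖h‖ ^ 2 := by
        have huy : u - y = (p - y) + h := by rw [hu]; abel
        rw [huy, norm_add_sq_real, real_inner_comm]
      rw [e1, e2]
      set A : ℝ := ⟪p, Dinv p - p⟫ with hA
      set B : ℝ := ⟪h, Dinv p - p⟫ with hB
      set C : ℝ := ⟪h, Dinv h - h⟫ with hC
      set E : ℝ := ⟪h, p - y⟫ with hE
      field_simp
      linarith [e3]
    have hQ : ∀ u : EuclideanSpace ℝ (Fin n),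
        (0:ℝ) ≤ (1 / 2 : ℝ) * ⟪u - p, Dinv (u - p) - (u - p)⟫ +
          (1 / (2 * τ)) * ‖u - p‖ ^ 2 := by
      intro u
      have h1 := hS (u - p)
      have h2 : (0:ℝ) ≤ (1 / (2 * τ)) * ‖u - p‖ ^ 2 := by positivity
      linarith
    constructor
    · intro u
      rw [key u]
      linarith [hQ u]
    · intro u hmin
      have h1 := hmin p
      rw [key u] at h1
      have ha : (0:ℝ) ≤ (1 / 2 : ℝ) * ⟪u - p, Dinv (u - p) - (u - p)⟫ := by
        linarith [hS (u - p)]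
      have h3 : (0:ℝ) < 1 / (2 * τ) := by positivity
      have h4 : ‖u - p‖ ^ 2 ≤ 0 := by
        have hbn : (1 / (2 * τ)) * ‖u - p‖ ^ 2 ≤ (1 / (2 * τ)) * 0 := by
          rw [mul_zero]; linarith
        exact le_of_mul_le_mul_left hbn h3
      have h5 : u - p = 0 := by
        have h6 : ‖u - p‖ ^ 2 = 0 := le_antisymm h4 (sq_nonneg _)
        have h7 : ‖u - p‖ = 0 := by
          exact pow_eq_zero_iff two_ne_zero |>.mp h6
        exact norm_eq_zero.mp h7
      exact sub_eq_zero.mp h5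
  · intro v lam hlam hv
    have hlam0 : lam ≠ 0 := (lt_of_lt_of_le hc hlam.1).ne'
    have hk0 : τ - lam * (τ - 1) ≠ 0 := (hden lam hlam).ne'
    have h1 : lam • Dinv v = v := by
      have := DFunLike.congr_fun hDinvD v
      simp only [LinearMap.comp_apply, LinearMap.id_apply] at this
      rw [hv, map_smul] at this
      exact this
    have hDinv_v : Dinv v = lam⁻¹ • v := by
      have h1' := congrArg (fun x => lam⁻¹ • x) h1
      simpa [smul_smul, inv_mul_cancel₀ hlam0] using h1'
    set k : ℝ := (τ - lam * (τ - 1)) / lam with hkdef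
    have hk : G v = k • v := by
      simp only [hGdef, LinearMap.sub_apply, LinearMap.smul_apply, LinearMap.id_apply,
        hDinv_v, smul_smul]
      rw [← sub_smul]
      congr 1
      field_simp [hkdef]
      rw [hkdef]
      field_simp
    have hkne : k ≠ 0 := by
      rw [hkdef]
      exact div_ne_zero hk0 hlam0
    have h2 : G (k⁻¹ • v) = v := by
      rw [map_smul, hk, smul_smul, inv_mul_cancel₀ hkne, one_smul]
    have h3 : Ginv v = k⁻¹ • v := by
      conv_lhs => rw [← h2]
      exact hGinvG' _
    rw [h3, hkdef, inv_div]
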